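/- Sufficiency of a QFI gap for a-majorization: if p and q are supported-below probability distributions on ℤ with F_min(p) > F_max(q) (as values in [0,∞]), then p ≻_a q. -/

import Mathlib

/-- Convolution of two sequences on `ℤ`: `(a*b)(n) = ∑_{k∈ℤ} a(k)·b(n−k)`.
For supported-below sequences this `tsum` has finitely many nonzero terms. -/
noncomputable def conv (a b : ℤ → ℝ) : ℤ → ℝ := fun n => ∑' k : ℤ, a k * b (n - k)

/-- A sequence is supported below if it vanishes for all sufficiently negative indices. -/
def SuppBelow (a : ℤ → ℝ) : Prop := ∃ N : ℤ, ∀ n : ℤ, n < N → a n = 0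

/-- A probability distribution on `ℤ`: nonnegative with total sum 1. -/
def IsProbDist (p : ℤ → ℝ) : Prop := (∀ n : ℤ, 0 ≤ p n) ∧ HasSum p 1

/-- `qt` is the reciprocal sequence `q̃` of `q`, relative to `nstar = n_*(q)`,
the least index where `q` is positive: `q̃` vanishes below `−n_*(q)` and
`(q̃*q)(n) = δ_{n,0}` for all `n`. -/
def IsRecip (q qt : ℤ → ℝ) (nstar : ℤ) : Prop :=
  IsLeast {n : ℤ | 0 < q n} nstar ∧ (∀ n : ℤ, n < -nstar → qt n = 0) ∧
  (∀ n : ℤ, conv qt q n = if n = 0 then (1 : ℝ) else 0)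

/-- The generalized Poisson sequence `P_λ : ℤ → ℝ`,
`P_λ(n) = e^{−λ}·λ^n/n!` for `n ≥ 0` and `P_λ(n) = 0` for `n < 0`. -/
noncomputable def poisson (lam : ℝ) : ℤ → ℝ :=
  fun n => if 0 ≤ n then Real.exp (-lam) * lam ^ n.toNat / (Nat.factorial n.toNat : ℝ) else 0

/-- The max-QFI `F_max(p) = inf{4λ | λ ≥ 0, P_λ ≻_a p} ∈ [0,∞]` (with
`inf ∅ = ∞`).  Since `P_λ ≻_a p` means `(P_λ * p̃)(n) ≥ 0` for all `n`, it is
expressed through the reciprocal sequence `pt = p̃` of `p`. -/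
noncomputable def Fmax (pt : ℤ → ℝ) : ENNReal :=
  sInf {x : ENNReal | ∃ lam : ℝ, 0 ≤ lam ∧
    (∀ n : ℤ, 0 ≤ conv (poisson lam) pt n) ∧ x = ENNReal.ofReal (4 * lam)}

/-- The min-QFI `F_min(p) = sup{4λ | λ ≥ 0, p ≻_a P_λ} ∈ [0,∞]`.  Since
`P̃_λ = P_{−λ}`, the condition `p ≻_a P_λ` reads `(p * P_{−λ})(n) ≥ 0`. -/
noncomputable def Fmin (p : ℤ → ℝ) : ENNReal :=
  sSup {x : ENNReal | ∃ lam : ℝ, 0 ≤ lam ∧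
    (∀ n : ℤ, 0 ≤ conv p (poisson (-lam)) n) ∧ x = ENNReal.ofReal (4 * lam)}

/- ### Auxiliary development -/

/-- Package a supported-below sequence as a Hahn series over `ℤ`. -/
noncomputable def H (a : ℤ → ℝ) (N : ℤ) (h : ∀ n : ℤ, n < N → a n = 0) : HahnSeries ℤ ℝ :=
  HahnSeries.ofSuppBddBelow a (HahnSeries.forallLTEqZero_supp_BddBelow a N h)

@[simp] lemma H_coeff (a : ℤ → ℝ) (N : ℤ) (h : ∀ n : ℤ, n < N → a n = 0) :
    (H a N h).coeff = a := rfl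

/-- The convolution of supported-below sequences as a finite sum. -/
lemma conv_eq_sum {a b : ℤ → ℝ} {Na Nb : ℤ} (ha : ∀ n : ℤ, n < Na → a n = 0)
    (hb : ∀ n : ℤ, n < Nb → b n = 0) (n : ℤ) :
    conv a b n = ∑ k ∈ Finset.Icc Na (n - Nb), a k * b (n - k) := by
  apply tsum_eq_sum
  intro k hk
  rw [Finset.mem_Icc, not_and_or, not_le, not_le] at hk
  rcases hk with h | h
  · rw [ha k h, zero_mul]
  · rw [hb (n - k) (by omega), mul_zero]

/-- The coefficient of a product of Hahn series is the convolution of coefficients. -/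
lemma mul_coeff_conv (x y : HahnSeries ℤ ℝ) (n : ℤ) :
    (x * y).coeff n = conv x.coeff y.coeff n := by
  classical
  rw [HahnSeries.coeff_mul, conv]
  rw [tsum_eq_sum (s :=
      (Finset.antidiagonal x.isPWO_support y.isPWO_support n).image Prod.fst)
      (by
        intro k hk
        by_contra hne
        apply hk
        have hx : x.coeff k ≠ 0 := fun h => hne (by rw [h, zero_mul])
        have hy : y.coeff (n - k) ≠ 0 := fun h => hne (by rw [h, mul_zero])
        refine Finset.mem_image.mpr ⟨(k, n - k), ?_, rfl⟩
        rw [Finset.mem_antidiagonal]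
        exact ⟨hx, hy, by ring⟩)]
  rw [Finset.sum_image (by
    intro u hu v hv huv
    rw [Finset.mem_coe, Finset.mem_antidiagonal] at hu hv
    have : u.2 = v.2 := by omega
    exact Prod.ext huv this)]
  apply Finset.sum_congr rfl
  intro ij hij
  rw [Finset.mem_antidiagonal] at hij
  have : n - ij.1 = ij.2 := by omega
  rw [this]

lemma poisson_supp (lam : ℝ) : ∀ n : ℤ, n < 0 → poisson lam n = 0 := by
  intro n hn; simp [poisson, not_le.mpr hn]

lemma poisson_nonneg {lam : ℝ} (h : 0 ≤ lam) (n : ℤ) : 0 ≤ poisson lam n := by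
  unfold poisson
  split
  · positivity
  · exact le_refl 0

lemma poisson_conv (a b : ℝ) (n : ℤ) :
    conv (poisson a) (poisson b) n = poisson (a + b) n := by
  rw [conv_eq_sum (poisson_supp a) (poisson_supp b)]
  rcases lt_or_ge n 0 with hn | hn
  · rw [Finset.Icc_eq_empty (by omega), Finset.sum_empty, poisson_supp _ n hn]
  · obtain ⟨m, rfl⟩ : ∃ m : ℕ, n = (m : ℤ) := ⟨n.toNat, (Int.toNat_of_nonneg hn).symm⟩
    rw [show ((m : ℤ) - 0) = (m : ℤ) by ring]
    rw [Finset.sum_nbij' (i := fun k : ℤ => k.toNat) (j := fun i : ℕ => (i : ℤ))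
      (t := Finset.range (m + 1)) (g := fun i : ℕ =>
        (Real.exp (-a) * a ^ i / (Nat.factorial i : ℝ)) *
        (Real.exp (-b) * b ^ (m - i) / (Nat.factorial (m - i) : ℝ)))
      (by intro k hk; simp only [Finset.mem_Icc] at hk
          simp only [Finset.mem_range]; omega)
      (by intro i hi; simp only [Finset.mem_range] at hi
          simp only [Finset.mem_Icc]; omega)
      (by intro k hk; simp only [Finset.mem_Icc] at hk; omega)
      (by intro i _; simp)
      (by
        intro k hk
        simp only [Finset.mem_Icc] at hk
        have h1 : (0 : ℤ) ≤ k := hk.1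
        have h2 : (0 : ℤ) ≤ (m : ℤ) - k := by omega
        simp only [poisson, if_pos h1, if_pos h2]
        have e1 : ((m : ℤ) - k).toNat = m - k.toNat := by omega
        rw [e1])]
    simp only [poisson, if_pos (by positivity : (0:ℤ) ≤ (m:ℤ)), Int.toNat_natCast]
    rw [add_pow, Finset.mul_sum, Finset.sum_div]
    apply Finset.sum_congr rfl
    intro i hi
    rw [Finset.mem_range] at hi
    have hle : i ≤ m := by omega
    have hfact : ((m.choose i : ℝ)) * (Nat.factorial i) * (Nat.factorial (m - i)) =
        (Nat.factorial m) := by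
      exact_mod_cast Nat.choose_mul_factorial_mul_factorial hle
    have hi0 : (Nat.factorial i : ℝ) ≠ 0 := Nat.cast_ne_zero.mpr (Nat.factorial_ne_zero i)
    have hmi0 : (Nat.factorial (m - i) : ℝ) ≠ 0 := Nat.cast_ne_zero.mpr (Nat.factorial_ne_zero _)
    have hm0 : (Nat.factorial m : ℝ) ≠ 0 := Nat.cast_ne_zero.mpr (Nat.factorial_ne_zero m)
    rw [show -(a + b) = -a + -b by ring, Real.exp_add]
    field_simp
    linear_combination (- a ^ i * b ^ (m - i)) * hfact

lemma poisson_zero (n : ℤ) : poisson 0 n = if n = 0 then (1 : ℝ) else 0 := by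
  unfold poisson
  rcases lt_trichotomy n 0 with h | h | h
  · rw [if_neg (not_le.mpr h), if_neg (by omega)]
  · subst h; norm_num
  · rw [if_pos h.le, if_neg (by omega)]
    have : n.toNat ≠ 0 := by omega
    rw [zero_pow this]
    simp

lemma mul_coeff_nonneg {x y : HahnSeries ℤ ℝ} (hx : ∀ n : ℤ, 0 ≤ x.coeff n)
    (hy : ∀ n : ℤ, 0 ≤ y.coeff n) (n : ℤ) : 0 ≤ (x * y).coeff n := by
  rw [mul_coeff_conv]
  exact tsum_nonneg fun k => mul_nonneg (hx k) (hy _)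

/-- sufficiency of a QFI gap for a-majorization: if `p, q` are
supported-below probability distributions on `ℤ` with `F_min(p) > F_max(q)`
in `[0,∞]`, then `p ≻_a q`. -/
theorem qfi_gap_amaj (p q pt qt : ℤ → ℝ) (np nq : ℤ)
    (hp : IsProbDist p) (hq : IsProbDist q)
    (hpb : SuppBelow p) (hqb : SuppBelow q)
    (hpt : IsRecip p pt np) (hqt : IsRecip q qt nq)
    (hgap : Fmax qt < Fmin p) :
    ∀ n : ℤ, 0 ≤ conv p qt n := by
  obtain ⟨x, ⟨lp, hlp0, hA, rfl⟩, hx⟩ := lt_sSup_iff.mp hgap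
  obtain ⟨y, ⟨lq, hlq0, hC, rfl⟩, hy⟩ := sInf_lt_iff.mp hx
  have hle : lq ≤ lp := by
    by_contra h
    exact absurd (ENNReal.ofReal_le_ofReal (by linarith : 4 * lp ≤ 4 * lq)) (not_le.mpr hy)
  obtain ⟨Np, hNp⟩ := hpb
  set X : HahnSeries ℤ ℝ := H p Np hNp with hX
  set Y : HahnSeries ℤ ℝ := H qt (-nq) hqt.2.1 with hY
  set PH : ℝ → HahnSeries ℤ ℝ := fun s => H (poisson s) 0 (poisson_supp s) with hPH
  have Pmul : ∀ s t : ℝ, PH s * PH t = PH (s + t) := by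
    intro s t
    ext n
    rw [mul_coeff_conv]
    exact poisson_conv s t n
  have P0 : PH 0 = 1 := by
    ext n
    rw [HahnSeries.coeff_one]
    convert poisson_zero n using 2
    rfl
  have key : X * Y = ((X * PH (-lp)) * PH (lp - lq)) * (PH lq * Y) := by
    have h1 : PH (-lp) * (PH (lp - lq) * PH lq) = 1 := by
      rw [Pmul, Pmul, show lp - lq + lq = lp by ring, show -lp + lp = 0 by ring, P0]
    calc X * Y = X * (PH (-lp) * (PH (lp - lq) * PH lq)) * Y := by rw [h1, mul_one]
      _ = ((X * PH (-lp)) * PH (lp - lq)) * (PH lq * Y) := by ring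
  intro n
  have hgoal : conv p qt n = (X * Y).coeff n := by rw [mul_coeff_conv]; rfl
  rw [hgoal, key]
  refine mul_coeff_nonneg (mul_coeff_nonneg ?_ ?_) ?_ n
  · intro m
    rw [mul_coeff_conv]
    exact hA m
  · intro m
    exact poisson_nonneg (by linarith : (0:ℝ) ≤ lp - lq) m
  · intro m
    rw [mul_coeff_conv]
    exact hC m
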